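/- For an odd prime p, the operator T on formal power series over ℚ defined by f|T = f|U² + f ⊗ χ_p + p·f|V² (with U, V the standard p-operators and χ_p(n) = (−n/p)) satisfies: the generating function 𝓗 = −1/12 + Σ_{n>0} H(n)qⁿ of Hurwitz–Kronecker class numbers is an eigenvector with eigenvalue p + 1, i.e., coefficient-wise H(p²n) + χ_p(n)H(n) + p·H(n/p²) = (p+1)H(n) for all n ≥ 0, where H(0) = −1/12. -/

import Mathlib

open Finset

/-- The Kronecker symbol `(a/2)`: `0` if `a` is even, `1` if `a ≡ ±1 (mod 8)`,
`−1` if `a ≡ ±3 (mod 8)`. -/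
def kronTwo (a : ℤ) : ℤ :=
  if a % 2 = 0 then 0 else if a % 8 = 1 ∨ a % 8 = 7 then 1 else -1

/-- The Kronecker symbol `(a/n)` for `n ≥ 1`, defined multiplicatively from the
Jacobi symbol on the odd part of `n` and `kronTwo` at `2`. -/
def kron (a : ℤ) (n : ℕ) : ℤ :=
  kronTwo a ^ (n.factorization 2) * jacobiSym a (n / 2 ^ (n.factorization 2))

/-- `−r` is a fundamental discriminant (`r > 0`). -/
def IsNegFund (r : ℕ) : Prop :=
  0 < r ∧ ((r % 4 = 3 ∧ Squarefree r) ∨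
    (r % 4 = 0 ∧ Squarefree (r / 4) ∧ (r / 4 % 4 = 1 ∨ r / 4 % 4 = 2)))

/-- `h(r)/w(r)` for a fundamental discriminant `−r < 0`, via the Dirichlet class
number formula `h = (w/(2r))·|Σ_{t<r} (−r/t)·t|`. -/
noncomputable def hOverW (r : ℕ) : ℚ :=
  |∑ t ∈ range r, (kron (-(r : ℤ)) t : ℚ) * t| / (2 * r)

open scoped Classical in
/-- The Hurwitz–Kronecker class number `H(n)` (with `H(0) = −1/12`): for
`n = 𝔯f²` with `−𝔯` a fundamental discriminant,
`H(n) = (h(𝔯)/w(𝔯))·Σ_{m∣f} μ(m)(−𝔯/m)σ₁(f/m)`, and `H(n) = 0` for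
`n ≡ 1,2 (mod 4)` (when no such decomposition exists). -/
noncomputable def hurwitzH (n : ℕ) : ℚ :=
  if n = 0 then -1 / 12
  else if h : ∃ rf : ℕ × ℕ, n = rf.1 * rf.2 ^ 2 ∧ IsNegFund rf.1 then
    hOverW (Classical.choose h).1 *
      ∑ m ∈ (Classical.choose h).2.divisors,
        (ArithmeticFunction.moebius m : ℚ) * (kron (-((Classical.choose h).1 : ℤ)) m : ℚ) *
          (ArithmeticFunction.sigma 1 ((Classical.choose h).2 / m) : ℚ)
  else 0

/-- The generating function `𝓗 = −1/12 + Σ H(n)qⁿ` of Hurwitz–Kronecker class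
numbers is an eigenvector of the weight `3/2` Hecke operator
`T = U² + ⊗χ_p + p·V²` with eigenvalue `p + 1`; coefficient-wise,
`H(p²n) + χ_p(n)H(n) + p·H(n/p²) = (p+1)H(n)` for all `n ≥ 0`. -/
lemma kron_one (a : ℤ) : kron a 1 = 1 := by
  simp [kron]

lemma kron_mul (a : ℤ) {m n : ℕ} (hm : m ≠ 0) (hn : n ≠ 0) :
    kron a (m * n) = kron a m * kron a n := by
  unfold kron
  rw [Nat.factorization_mul hm hn, Finsupp.add_apply, pow_add]
  have h2 : (2 : ℕ).Prime := Nat.prime_two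
  have : m * n / 2 ^ (m.factorization 2 + n.factorization 2)
      = (m / 2 ^ m.factorization 2) * (n / 2 ^ n.factorization 2) := by
    have := Nat.ordCompl_mul m n 2
    simpa [Nat.factorization_mul hm hn, Finsupp.add_apply, pow_add] using this
  rw [this, jacobiSym.mul_right' a (Nat.ordCompl_pos 2 hm).ne' (Nat.ordCompl_pos 2 hn).ne']
  ring

lemma kron_prime (a : ℤ) (p : ℕ) [Fact p.Prime] (hodd : p ≠ 2) :
    kron a p = legendreSym p a := by
  have h : p.factorization 2 = 0 := by
    rw [(Fact.out : p.Prime).factorization, Finsupp.single_apply]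
    simp [hodd]
  rw [kron, h, pow_zero, one_mul, pow_zero, Nat.div_one, jacobiSym.legendreSym.to_jacobiSym]

open ArithmeticFunction in
noncomputable def chiF (a : ℤ) : ArithmeticFunction ℚ :=
  ⟨fun n => if n = 0 then 0 else (kron a n : ℚ), by simp⟩

lemma chiF_apply (a : ℤ) {n : ℕ} (hn : n ≠ 0) : chiF a n = (kron a n : ℚ) := by
  simp [chiF, hn]

open ArithmeticFunction in
lemma chiF_mult (a : ℤ) : (chiF a).IsMultiplicative := by
  constructor
  · simp [chiF, kron_one]
  · intro m n _
    rcases eq_or_ne m 0 with rfl | hm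
    · simp [chiF]
    rcases eq_or_ne n 0 with rfl | hn
    · simp [chiF]
    simp [chiF, hm, hn, Nat.mul_ne_zero hm hn, kron_mul a hm hn]

lemma kron_pow (a : ℤ) {m : ℕ} (hm : m ≠ 0) (k : ℕ) : kron a (m ^ k) = kron a m ^ k := by
  induction k with
  | zero => simpa using kron_one a
  | succ k ih => rw [pow_succ, pow_succ, kron_mul a (pow_ne_zero k hm) hm, ih]

open ArithmeticFunction in
noncomputable def lamF (a : ℤ) : ArithmeticFunction ℚ :=
  ((moebius : ArithmeticFunction ℚ).pmul (chiF a)) * ((sigma 1 : ArithmeticFunction ℕ) : ArithmeticFunction ℚ)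

open ArithmeticFunction in
lemma lamF_mult (a : ℤ) : (lamF a).IsMultiplicative :=
  (isMultiplicative_moebius.intCast.pmul (chiF_mult a)).mul isMultiplicative_sigma.natCast

open ArithmeticFunction in
lemma lamF_eq_sum (a : ℤ) {f : ℕ} (hf : f ≠ 0) :
    lamF a f = ∑ m ∈ f.divisors, (moebius m : ℚ) * (kron a m : ℚ) * (sigma 1 (f / m) : ℚ) := by
  rw [lamF, mul_apply, Nat.sum_divisorsAntidiagonal (fun x y => ((moebius : ArithmeticFunction ℚ).pmul (chiF a)) x * ((sigma 1 : ArithmeticFunction ℕ) : ArithmeticFunction ℚ) y)]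
  refine Finset.sum_congr rfl fun d hd => ?_
  have hd0 : d ≠ 0 := (Nat.pos_of_mem_divisors hd).ne'
  simp [pmul_apply, chiF_apply a hd0]

open ArithmeticFunction in
lemma lamF_prime_pow (a : ℤ) {p : ℕ} (hp : p.Prime) (k : ℕ) :
    lamF a (p ^ k) = (sigma 1 (p ^ k) : ℚ)
      - chiF a p * (if k = 0 then 0 else (sigma 1 (p ^ (k - 1)) : ℚ)) := by
  set G := (moebius : ArithmeticFunction ℚ).pmul (chiF a) with hG
  rw [lamF, mul_apply,
    Nat.sum_divisorsAntidiagonal (fun x y => G x * ((sigma 1 : ArithmeticFunction ℕ) : ArithmeticFunction ℚ) y),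
    Nat.sum_divisors_prime_pow hp]
  have hterm : ∀ i ∈ range (k + 1),
      G (p ^ i) * ((sigma 1 : ArithmeticFunction ℕ) : ArithmeticFunction ℚ) (p ^ k / p ^ i)
        = (if i = 0 then (sigma 1 (p ^ k) : ℚ)
            else if i = 1 then -(chiF a p * (sigma 1 (p ^ (k - 1)) : ℚ)) else 0) := by
    intro i hi
    have hik : i ≤ k := Nat.lt_succ_iff.mp (mem_range.mp hi)
    rw [Nat.pow_div hik hp.pos]
    rcases Nat.eq_zero_or_pos i with rfl | hi0
    · simp [hG, pmul_apply, chiF_apply a one_ne_zero, kron_one, natCoe_apply]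
    · have hne : i ≠ 0 := hi0.ne'
      rcases eq_or_ne i 1 with rfl | hi1
      · simp [hG, pmul_apply, moebius_apply_prime hp, chiF_apply a hp.pos.ne',
          natCoe_apply, intCoe_apply]
      · have : moebius (p ^ i) = 0 := by
          rw [moebius_apply_prime_pow hp hne]
          simp [hi1]
        simp [hG, pmul_apply, intCoe_apply, this, hne, hi1]
  rw [Finset.sum_congr rfl hterm, Finset.sum_range_succ']
  have h2 : ∀ i ∈ range k, (if i + 1 = 0 then (sigma 1 (p ^ k) : ℚ)
      else if i + 1 = 1 then -(chiF a p * (sigma 1 (p ^ (k - 1)) : ℚ)) else 0)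
      = (if i = 0 then -(chiF a p * (sigma 1 (p ^ (k - 1)) : ℚ)) else 0) := by
    intro i _
    simp [Nat.succ_ne_zero]
  rw [Finset.sum_congr rfl h2,
    Finset.sum_ite_eq' (range k) 0 (fun _ => -(chiF a p * (sigma 1 (p ^ (k - 1)) : ℚ)))]
  rcases eq_or_ne k 0 with rfl | hk
  · simp
  · simp only [Finset.mem_range, Nat.pos_of_ne_zero hk, if_true, hk, if_false, if_pos]
    ring

open ArithmeticFunction in
lemma sigmaQ_pow (p k : ℕ) (hp : p.Prime) :
    (sigma 1 (p ^ k) : ℚ) = ∑ i ∈ range (k + 1), (p : ℚ) ^ i := by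
  rw [sigma_one_apply_prime_pow hp]
  push_cast
  rfl

open ArithmeticFunction in
lemma sigmaQ_rec (p k : ℕ) (hp : p.Prime) :
    (sigma 1 (p ^ (k + 2)) : ℚ) + p * (sigma 1 (p ^ k) : ℚ)
      = ((p : ℚ) + 1) * (sigma 1 (p ^ (k + 1)) : ℚ) := by
  have h0 := sigmaQ_pow p k hp
  have h1 := sigmaQ_pow p (k + 1) hp
  have h2 := sigmaQ_pow p (k + 2) hp
  have e1 : (sigma 1 (p ^ (k + 1)) : ℚ) = p * (sigma 1 (p ^ k) : ℚ) + 1 := by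
    rw [h0, h1, Finset.sum_range_succ', Finset.mul_sum]
    simp [pow_succ, mul_comm]
  have e2 : (sigma 1 (p ^ (k + 2)) : ℚ) = p * (sigma 1 (p ^ (k + 1)) : ℚ) + 1 := by
    rw [h1, h2, Finset.sum_range_succ', Finset.mul_sum]
    simp [pow_succ, mul_comm]
  rw [e2, e1]
  ring

open ArithmeticFunction in
lemma lam_p_rec (a : ℤ) {p : ℕ} (hp : p.Prime) (e : ℕ) :
    lamF a (p ^ (e + 2)) + p * lamF a (p ^ e) = ((p : ℚ) + 1) * lamF a (p ^ (e + 1)) := by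
  rw [lamF_prime_pow a hp (e + 2), lamF_prime_pow a hp e, lamF_prime_pow a hp (e + 1)]
  have hs1 : ((sigma 1 1 : ℕ) : ℚ) = 1 := by norm_num [sigma_one_apply]
  have hsp : ((sigma 1 p : ℕ) : ℚ) = (p : ℚ) + 1 := by
    have h := sigmaQ_pow p 1 hp
    rw [pow_one] at h
    rw [h, Finset.sum_range_succ, Finset.sum_range_one]
    ring
  rcases e with _ | d
  · simp only [if_pos, if_neg (Nat.succ_ne_zero 0), if_neg (Nat.succ_ne_zero 1)]
    norm_num [sigmaQ_pow p _ hp, Finset.sum_range_succ, hs1, hsp]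
    ring
  · simp only [if_neg (Nat.succ_ne_zero d), if_neg (Nat.succ_ne_zero (d+1)),
      if_neg (Nat.succ_ne_zero (d+2)), Nat.succ_sub_one, Nat.add_sub_cancel]
    linear_combination (sigmaQ_rec p (d + 1) hp) - chiF a p * (sigmaQ_rec p d hp)

open ArithmeticFunction in
lemma lam_case0 (a : ℤ) {p u : ℕ} (hp : p.Prime) (hu : u ≠ 0) (hpu : ¬ p ∣ u) :
    lamF a (p * u) + chiF a p * lamF a u = ((p : ℚ) + 1) * lamF a u := by
  have hcop : Nat.Coprime p u := (Nat.Prime.coprime_iff_not_dvd hp).mpr hpu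
  rw [(lamF_mult a).map_mul_of_coprime hcop]
  have h1 : lamF a p = ((p : ℚ) + 1) - chiF a p := by
    have := lamF_prime_pow a hp 1
    rw [pow_one] at this
    rw [this]
    have hs1 : ((sigma 1 1 : ℕ) : ℚ) = 1 := by norm_num [sigma_one_apply]
    have h := sigmaQ_pow p 1 hp
    rw [pow_one] at h
    rw [h, Finset.sum_range_succ, Finset.sum_range_one]
    norm_num [hs1]
    ring
  rw [h1]
  ring

open ArithmeticFunction in
lemma lam_caseS (a : ℤ) {p u : ℕ} (hp : p.Prime) (hpu : ¬ p ∣ u) (e : ℕ) :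
    lamF a (p ^ (e + 2) * u) + p * lamF a (p ^ e * u)
      = ((p : ℚ) + 1) * lamF a (p ^ (e + 1) * u) := by
  have hcop : Nat.Coprime p u := (Nat.Prime.coprime_iff_not_dvd hp).mpr hpu
  rw [(lamF_mult a).map_mul_of_coprime (hcop.pow_left _),
    (lamF_mult a).map_mul_of_coprime (hcop.pow_left _),
    (lamF_mult a).map_mul_of_coprime (hcop.pow_left _)]
  have := lam_p_rec a hp e
  linear_combination lamF a u * this

lemma sf_unique {s1 g1 s2 g2 : ℕ} (h1 : Squarefree s1) (h2 : Squarefree s2)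
    (hg1 : g1 ≠ 0) (hg2 : g2 ≠ 0) (h : s1 * g1 ^ 2 = s2 * g2 ^ 2) : s1 = s2 := by
  have hs1 : s1 ≠ 0 := h1.ne_zero
  have hs2 : s2 ≠ 0 := h2.ne_zero
  apply Nat.eq_of_factorization_eq hs1 hs2
  intro q
  have e : s1.factorization q + 2 * g1.factorization q
      = s2.factorization q + 2 * g2.factorization q := by
    have := congrArg (fun m : ℕ => m.factorization q) h
    simpa [Nat.factorization_mul hs1 (pow_ne_zero 2 hg1),
      Nat.factorization_mul hs2 (pow_ne_zero 2 hg2), Nat.factorization_pow,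
      Finsupp.add_apply, Finsupp.smul_apply, two_mul] using this
  have b1 : s1.factorization q ≤ 1 := (Nat.squarefree_iff_factorization_le_one hs1).mp h1 q
  have b2 : s2.factorization q ≤ 1 := (Nat.squarefree_iff_factorization_le_one hs2).mp h2 q
  omega

lemma negfund_four {r : ℕ} (h : r % 4 = 0) : r = 4 * (r / 4) :=
  (Nat.mul_div_cancel' (Nat.dvd_of_mod_eq_zero h)).symm

lemma four_shift {r f : ℕ} (h : r % 4 = 0) : r * f ^ 2 = (r / 4) * (2 * f) ^ 2 := by
  have h4 := negfund_four h
  conv_lhs => rw [h4]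
  ring

lemma negfund_unique {r1 f1 r2 f2 : ℕ} (h1 : IsNegFund r1) (h2 : IsNegFund r2)
    (hf1 : f1 ≠ 0) (hf2 : f2 ≠ 0) (h : r1 * f1 ^ 2 = r2 * f2 ^ 2) : r1 = r2 ∧ f1 = f2 := by
  have hr : r1 = r2 := by
    rcases h1.2 with ⟨hm1, hsq1⟩ | ⟨hm1, hsq1, hc1⟩ <;>
      rcases h2.2 with ⟨hm2, hsq2⟩ | ⟨hm2, hsq2, hc2⟩
    · exact sf_unique hsq1 hsq2 hf1 hf2 h
    · exfalso
      have h' : r1 * f1 ^ 2 = (r2 / 4) * (2 * f2) ^ 2 := by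
        rw [h, four_shift hm2]
      have := sf_unique hsq1 hsq2 hf1 (by omega) h'
      omega
    · exfalso
      have h' : (r1 / 4) * (2 * f1) ^ 2 = r2 * f2 ^ 2 := by
        rw [← h, four_shift hm1]
      have := sf_unique hsq1 hsq2 (by omega) hf2 h'
      omega
    · have h' : (r1 / 4) * (2 * f1) ^ 2 = (r2 / 4) * (2 * f2) ^ 2 := by
        rw [← four_shift hm1, ← four_shift hm2, h]
      have := sf_unique hsq1 hsq2 (by omega) (by omega) h'
      omega
  subst hr
  refine ⟨rfl, ?_⟩
  have := Nat.eq_of_mul_eq_mul_left h1.1 h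
  exact Nat.pow_left_injective (by norm_num) this

lemma negfund_factorization_le {r p : ℕ} (h : IsNegFund r) (hp : p.Prime) (hodd : p ≠ 2) :
    r.factorization p ≤ 1 := by
  rcases h.2 with ⟨_, hsq⟩ | ⟨hm, hsq, _⟩
  · exact (Nat.squarefree_iff_factorization_le_one hsq.ne_zero).mp hsq p
  · have hs0 : r / 4 ≠ 0 := hsq.ne_zero
    have hnd : ¬ p ∣ 4 := by
      intro hd
      exact hodd ((Nat.prime_dvd_prime_iff_eq hp Nat.prime_two).mp
        (hp.dvd_of_dvd_pow (show p ∣ 2 ^ 2 by norm_num; exact hd)))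
    have := negfund_four hm
    rw [this, Nat.factorization_mul (by norm_num) hs0, Finsupp.add_apply,
      Nat.factorization_eq_zero_of_not_dvd hnd, zero_add]
    exact (Nat.squarefree_iff_factorization_le_one hs0).mp hsq p

lemma negfund_p_dvd_f {r f p : ℕ} (h : IsNegFund r) (hp : p.Prime) (hodd : p ≠ 2)
    (hf : f ≠ 0) (hdvd : p ^ 2 ∣ r * f ^ 2) : p ∣ f := by
  have hn0 : r * f ^ 2 ≠ 0 := Nat.mul_ne_zero h.1.ne' (pow_ne_zero 2 hf)
  have h2 : 2 ≤ (r * f ^ 2).factorization p :=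
    (Nat.Prime.pow_dvd_iff_le_factorization hp hn0).mp hdvd
  rw [Nat.factorization_mul h.1.ne' (pow_ne_zero 2 hf), Finsupp.add_apply,
    Nat.factorization_pow, Finsupp.smul_apply] at h2
  have := negfund_factorization_le h hp hodd
  have h1 : 1 ≤ f.factorization p := by
    simp only [smul_eq_mul] at h2; omega
  exact (Nat.Prime.dvd_iff_one_le_factorization hp hf).mpr h1

lemma hurwitzH_zero : hurwitzH 0 = -1 / 12 := by rw [hurwitzH]; simp

lemma hurwitzH_of_not_exists {n : ℕ} (hn : n ≠ 0)
    (h : ¬ ∃ rf : ℕ × ℕ, n = rf.1 * rf.2 ^ 2 ∧ IsNegFund rf.1) : hurwitzH n = 0 := by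
  rw [hurwitzH, if_neg hn, dif_neg h]

lemma hurwitzH_eq {n r f : ℕ} (hn : n ≠ 0) (hd : n = r * f ^ 2) (hr : IsNegFund r) :
    hurwitzH n = hOverW r * lamF (-(r : ℤ)) f := by
  have hf : f ≠ 0 := by rintro rfl; simp at hd; exact hn hd
  have hex : ∃ rf : ℕ × ℕ, n = rf.1 * rf.2 ^ 2 ∧ IsNegFund rf.1 := ⟨(r, f), hd, hr⟩
  rw [hurwitzH, if_neg hn, dif_pos hex]
  obtain ⟨hd', hr'⟩ := Classical.choose_spec hex
  have hfq : (Classical.choose hex).2 ≠ 0 := by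
    rintro h0
    rw [h0] at hd'
    simp at hd'
    exact hn hd'
  obtain ⟨e1, e2⟩ := negfund_unique hr' hr hfq hf (by rw [← hd', ← hd])
  rw [e1, e2, lamF_eq_sum _ hf]

theorem hurwitzH_hecke_eigen (p : ℕ) [Fact p.Prime] (hodd : p ≠ 2) :
    ∀ n : ℕ,
      hurwitzH (p ^ 2 * n) + (legendreSym p (-(n : ℤ)) : ℚ) * hurwitzH n
          + p * (if p ^ 2 ∣ n then hurwitzH (n / p ^ 2) else 0)
        = (p + 1) * hurwitzH n := by
  intro n
  have hp : p.Prime := Fact.out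
  have hp2 : (p : ℕ) ^ 2 ≠ 0 := pow_ne_zero 2 hp.pos.ne'
  rcases eq_or_ne n 0 with rfl | hn
  · rw [mul_zero, hurwitzH_zero]
    simp only [Nat.cast_zero, neg_zero, legendreSym.at_zero, Int.cast_zero, dvd_zero,
      if_true, Nat.zero_div, hurwitzH_zero]
    ring
  · by_cases hex : ∃ rf : ℕ × ℕ, n = rf.1 * rf.2 ^ 2 ∧ IsNegFund rf.1
    · obtain ⟨⟨r, f⟩, hd, hr⟩ := hex
      set a := -(r : ℤ) with ha
      have hf : f ≠ 0 := by rintro rfl; simp at hd; exact hn hd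
      set e := f.factorization p with he
      set u := ordCompl[p] f with hu
      have hfu : f = p ^ e * u := (Nat.ordProj_mul_ordCompl_eq_self f p).symm
      have hpu : ¬ p ∣ u := Nat.not_dvd_ordCompl hp hf
      have hu0 : u ≠ 0 := (Nat.ordCompl_pos p hf).ne'
      have hHn : hurwitzH n = hOverW r * lamF a (p ^ e * u) :=
        hurwitzH_eq hn (by rw [hd, hfu]) hr
      have hHpn : hurwitzH (p ^ 2 * n) = hOverW r * lamF a (p ^ (e + 1) * u) :=
        hurwitzH_eq (Nat.mul_ne_zero hp2 hn) (by rw [hd, hfu]; ring) hr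
      have hleg : (legendreSym p (-(n : ℤ)) : ℚ) = if e = 0 then chiF a p else 0 := by
        rcases eq_or_ne e 0 with h0 | h1
        · have hpf : ¬ p ∣ f := by
            intro hdf
            have := (Nat.Prime.dvd_iff_one_le_factorization hp hf).mp hdf
            omega
          have hfz : ((f : ℤ) : ZMod p) ≠ 0 := by
            rw [Int.cast_natCast, Ne, ZMod.natCast_eq_zero_iff]
            exact hpf
          have hneg : (-(n : ℤ)) = a * (f : ℤ) ^ 2 := by rw [hd]; push_cast; ring
          rw [hneg, legendreSym.mul, legendreSym.sq_one' (p := p) hfz, mul_one, if_pos h0,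
            chiF_apply a hp.pos.ne', kron_prime a p hodd]
        · have hpf : p ∣ f := (Nat.Prime.dvd_iff_one_le_factorization hp hf).mpr (by omega)
          have hpn : p ∣ n := by
            rw [hd]
            exact Dvd.dvd.mul_left (hpf.trans (dvd_pow_self f two_ne_zero)) r
          have : ((-(n : ℤ) : ℤ) : ZMod p) = 0 := by
            push_cast
            rw [neg_eq_zero, ZMod.natCast_eq_zero_iff]
            exact hpn
          rw [(legendreSym.eq_zero_iff p _).mpr this, if_neg h1]
          norm_num
      have hdvd : p ^ 2 ∣ n ↔ e ≠ 0 := by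
        constructor
        · intro h2
          have hdf : p ∣ f := negfund_p_dvd_f hr hp hodd hf (by rw [← hd]; exact h2)
          have := (Nat.Prime.dvd_iff_one_le_factorization hp hf).mp hdf
          omega
        · intro h1
          have hdf : p ∣ f := (Nat.Prime.dvd_iff_one_le_factorization hp hf).mpr (by omega)
          calc p ^ 2 ∣ f ^ 2 := pow_dvd_pow_of_dvd hdf 2
            _ ∣ n := by rw [hd]; exact Dvd.intro_left r rfl
      rcases Nat.eq_zero_or_pos e with h0 | hpos
      · rw [hHpn, hHn, hleg, if_pos h0, if_neg (fun hh => (hdvd.mp hh) h0), h0]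
        simp only [pow_zero, one_mul, zero_add, pow_one]
        linear_combination hOverW r * lam_case0 a hp hu0 hpu
      · obtain ⟨d, hde⟩ : ∃ d, e = d + 1 := ⟨e - 1, by omega⟩
        rw [hde] at hHn hHpn hleg hdvd
        have hq : hurwitzH (n / p ^ 2) = hOverW r * lamF a (p ^ d * u) := by
          have hnd : n = p ^ 2 * (r * (p ^ d * u) ^ 2) := by rw [hd, hfu, hde]; ring
          have hdiv : n / p ^ 2 = r * (p ^ d * u) ^ 2 := by
            rw [hnd, Nat.mul_div_cancel_left _ (Nat.pos_of_ne_zero hp2)]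
          exact hurwitzH_eq (by
            rw [hdiv]
            exact Nat.mul_ne_zero hr.1.ne' (pow_ne_zero 2 (Nat.mul_ne_zero (pow_ne_zero d hp.pos.ne') hu0))) hdiv hr
        rw [hHpn, hHn, hleg, if_neg (Nat.succ_ne_zero d), if_pos (hdvd.mpr (Nat.succ_ne_zero d)), hq]
        have := lam_caseS a hp hpu d
        linear_combination hOverW r * this
    · have hHn0 := hurwitzH_of_not_exists hn hex
      have hpn0 : hurwitzH (p ^ 2 * n) = 0 := by
        apply hurwitzH_of_not_exists (Nat.mul_ne_zero hp2 hn)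
        rintro ⟨⟨r, g⟩, hd, hr⟩
        have hg : g ≠ 0 := by
          rintro rfl
          have h0 : p ^ 2 * n = 0 := by simpa using hd
          exact (Nat.mul_ne_zero hp2 hn) h0
        have hdg : p ∣ g := negfund_p_dvd_f hr hp hodd hg (by rw [← hd]; exact dvd_mul_right _ _)
        obtain ⟨g', rfl⟩ := hdg
        apply hex
        refine ⟨(r, g'), ?_, hr⟩
        have h2 : p ^ 2 * n = p ^ 2 * (r * g' ^ 2) := by rw [hd]; ring
        exact Nat.eq_of_mul_eq_mul_left (Nat.pos_of_ne_zero hp2) h2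
      rw [hHn0, hpn0]
      by_cases hdv : p ^ 2 ∣ n
      · rw [if_pos hdv]
        obtain ⟨m, rfl⟩ := hdv
        have hm : m ≠ 0 := by rintro rfl; simp at hn
        have hq0 : hurwitzH (p ^ 2 * m / p ^ 2) = 0 := by
          rw [Nat.mul_div_cancel_left _ (Nat.pos_of_ne_zero hp2)]
          apply hurwitzH_of_not_exists hm
          rintro ⟨⟨r, g⟩, hdq, hr⟩
          exact hex ⟨(r, p * g), by rw [hdq]; ring, hr⟩
        rw [hq0]
        ring
      · rw [if_neg hdv]
        ring
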